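/- For a formal power series G(z) = (1+z²u_2+...+z^n u_n)^{m/n} over ℚ[u_2,...,u_n] with coefficients w_k, the quotient rings ℚ[u_2,...,u_n]/J_{m/n} and ℚ[v_2,...,v_m]/J_{n/m} are isomorphic as graded rings, where J_{m/n} is generated by {w_k : k > m}, J_{n/m} is generated by the coefficients of z^k for k > n in (1+z²v_2+...+z^m v_m)^{n/m}, and the grading assigns degree i to u_i and v_i. -/

import Mathlib

open PowerSeries

/-- Generalized binomial coefficient `C(α, j) = α(α-1)⋯(α-j+1)/j!`. -/
noncomputable def gbinom (α : ℚ) (j : ℕ) : ℚ :=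
  (∏ i ∈ Finset.range j, (α - i)) / (j.factorial : ℚ)

/-- The binomial series `(1 + w)^α = ∑_j C(α,j) w^j`, for a power series `w`
(intended to have zero constant term, so that each coefficient is a finite sum). -/
noncomputable def fpow {R : Type*} [CommRing R] [Algebra ℚ R]
    (w : PowerSeries R) (α : ℚ) : PowerSeries R :=
  PowerSeries.mk fun k => ∑ j ∈ Finset.range (k + 1),
    gbinom α j • (PowerSeries.coeff (R := R) k (w ^ j))

lemma gbinom_zero_right (α : ℚ) : gbinom α 0 = 1 := by simp [gbinom]

lemma gbinom_zero_left {j : ℕ} (hj : 0 < j) : gbinom (0 : ℚ) j = 0 := by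
  rw [gbinom, Finset.prod_eq_zero (Finset.mem_range.mpr hj) (by simp), zero_div]

lemma gbinom_one {j : ℕ} (hj : 2 ≤ j) : gbinom (1 : ℚ) j = 0 := by
  rw [gbinom, Finset.prod_eq_zero (i := 1) (Finset.mem_range.mpr hj) (by simp), zero_div]

lemma gbinom_one_one : gbinom (1 : ℚ) 1 = 1 := by
  simp [gbinom]

lemma gbinom_eq_choose (α : ℚ) (j : ℕ) : gbinom α j = Ring.choose α j := by
  have h1 : (descPochhammer ℤ j).smeval α = ∏ i ∈ Finset.range j, (α - i) := by
    rw [← Polynomial.aeval_eq_smeval, Polynomial.aeval_def, ← Polynomial.eval_map,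
      descPochhammer_map (algebraMap ℤ ℚ)]
    induction j with
    | zero => simp
    | succ j ih => rw [descPochhammer_succ_eval, ih, Finset.prod_range_succ]
  have h2 := Ring.descPochhammer_eq_factorial_smul_choose α j
  rw [h1] at h2
  rw [gbinom, h2, nsmul_eq_mul]
  field_simp

lemma gbinom_add (α β : ℚ) (k : ℕ) :
    gbinom (α + β) k = ∑ p ∈ Finset.HasAntidiagonal.antidiagonal k, gbinom α p.1 * gbinom β p.2 := by
  simp only [gbinom_eq_choose]
  exact Ring.add_choose_eq k (Commute.all α β)

variable {R : Type*} [CommRing R] [Algebra ℚ R] {u : R⟦X⟧}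

lemma coeff_pow_eq_zero (hu : constantCoeff u = 0) {j k : ℕ} (h : k < j) :
    coeff k (u ^ j) = 0 :=
  X_pow_dvd_iff.mp (pow_dvd_pow_of_dvd (X_dvd_iff.mpr hu) j) k h

lemma coeff_fpow (hu : constantCoeff u = 0) (α : ℚ) {k N : ℕ} (h : k < N) :
    coeff k (fpow u α) = ∑ j ∈ Finset.range N, gbinom α j • coeff k (u ^ j) := by
  rw [fpow, coeff_mk]
  refine Finset.sum_subset (Finset.range_subset_range.mpr h) ?_
  intro j hj hj'
  rw [coeff_pow_eq_zero hu (by simp only [Finset.mem_range] at hj hj' ⊢; omega), smul_zero]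

lemma constantCoeff_fpow (hu : constantCoeff u = 0) (α : ℚ) :
    constantCoeff (fpow u α) = 1 := by
  rw [← coeff_zero_eq_constantCoeff_apply, coeff_fpow hu α (Nat.zero_lt_one)]
  simp [gbinom_zero_right]

lemma fpow_zero (u : R⟦X⟧) : fpow u 0 = 1 := by
  ext k
  rw [fpow, coeff_mk, Finset.sum_eq_single 0]
  · simp [gbinom_zero_right]
  · intro j _ hj
    rw [gbinom_zero_left (Nat.pos_of_ne_zero hj), zero_smul]
  · simp

lemma fpow_exp_one (hu : constantCoeff u = 0) : fpow u 1 = 1 + u := by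
  ext k
  rcases Nat.eq_zero_or_pos k with rfl | hk
  · rw [coeff_zero_eq_constantCoeff_apply, constantCoeff_fpow hu, map_add,
      coeff_zero_eq_constantCoeff_apply, coeff_zero_eq_constantCoeff_apply, hu,
      constantCoeff_one, add_zero]
  · rw [coeff_fpow hu 1 (show k < k + 1 by omega)]
    have hsub : ∑ j ∈ Finset.range 2, gbinom 1 j • coeff k (u ^ j) =
        ∑ j ∈ Finset.range (k + 1), gbinom 1 j • coeff k (u ^ j) :=
      Finset.sum_subset (Finset.range_subset_range.mpr (show 2 ≤ k + 1 by omega))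
        (fun j _ hj => by
          rw [gbinom_one (by simp only [Finset.mem_range] at hj; omega), zero_smul])
    rw [← hsub, Finset.sum_range_succ, Finset.sum_range_one, gbinom_zero_right, gbinom_one_one,
      pow_zero, pow_one, one_smul, one_smul, map_add]


/-- finite partial sum -/
noncomputable def fpowF (u : R⟦X⟧) (α : ℚ) (N : ℕ) : R⟦X⟧ :=
  ∑ j ∈ Finset.range N, gbinom α j • u ^ j

lemma coeff_fpowF_eq (hu : constantCoeff u = 0) (α : ℚ) {k N : ℕ} (h : k < N) :
    coeff k (fpow u α) = coeff k (fpowF u α N) := by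
  rw [coeff_fpow hu α h, fpowF, map_sum]
  simp

lemma fpow_mul_fpow (hu : constantCoeff u = 0) (α β : ℚ) :
    fpow u α * fpow u β = fpow u (α + β) := by
  ext k
  have hk : k < k + 1 := Nat.lt_succ_self k
  set N := k + 1 with hN
  -- replace both factors with partial sums
  have h1 : coeff k (fpow u α * fpow u β) = coeff k (fpowF u α N * fpowF u β N) := by
    rw [coeff_mul, coeff_mul]
    refine Finset.sum_congr rfl fun p hp => ?_
    rw [Finset.HasAntidiagonal.mem_antidiagonal] at hp
    rw [coeff_fpowF_eq hu α (show p.1 < N by omega), coeff_fpowF_eq hu β (show p.2 < N by omega)]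
  rw [h1]
  have h2 : fpowF u α N * fpowF u β N =
      ∑ p ∈ Finset.range N ×ˢ Finset.range N, (gbinom α p.1 * gbinom β p.2) • u ^ (p.1 + p.2) := by
    rw [fpowF, fpowF, Finset.sum_mul_sum, Finset.sum_product]
    refine Finset.sum_congr rfl fun i _ => Finset.sum_congr rfl fun j _ => ?_
    rw [smul_mul_smul_comm, pow_add]
  rw [h2, map_sum, coeff_fpow hu (α + β) hk]
  simp only [coeff_smul]
  -- RHS: expand gbinom_add
  have h3 : ∑ j ∈ Finset.range N, gbinom (α + β) j • coeff k (u ^ j) =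
      ∑ s ∈ Finset.range N, ∑ p ∈ Finset.HasAntidiagonal.antidiagonal s,
        (gbinom α p.1 * gbinom β p.2) • coeff k (u ^ (p.1 + p.2)) := by
    refine Finset.sum_congr rfl fun s _ => ?_
    rw [gbinom_add, Finset.sum_smul]
    refine Finset.sum_congr rfl fun p hp => ?_
    rw [Finset.HasAntidiagonal.mem_antidiagonal] at hp
    rw [hp]
  rw [h3]
  rw [← Finset.sum_biUnion (by
    intro s _ t _ hst
    simp only [Function.onFun, Finset.disjoint_left]
    intro p hp hq
    rw [Finset.HasAntidiagonal.mem_antidiagonal] at hp hq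
    exact hst (hp ▸ hq))]
  refine (Finset.sum_subset ?_ ?_).symm
  · intro p hp
    rw [Finset.mem_biUnion] at hp
    obtain ⟨s, hs, hps⟩ := hp
    rw [Finset.HasAntidiagonal.mem_antidiagonal] at hps
    rw [Finset.mem_range] at hs
    simp only [Finset.mem_product, Finset.mem_range]
    omega
  · intro p hp hp'
    have : k < p.1 + p.2 := by
      by_contra h
      exact hp' (Finset.mem_biUnion.mpr ⟨p.1 + p.2, Finset.mem_range.mpr (by omega),
        Finset.HasAntidiagonal.mem_antidiagonal.mpr rfl⟩)
    rw [coeff_pow_eq_zero hu this, smul_zero]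


lemma fpow_pow (hu : constantCoeff u = 0) (α : ℚ) (N : ℕ) :
    (fpow u α) ^ N = fpow u (N * α) := by
  induction N with
  | zero => simp [fpow_zero]
  | succ N ih =>
    rw [pow_succ, ih, fpow_mul_fpow hu, Nat.cast_succ]
    ring_nf

lemma fpow_natCast (hu : constantCoeff u = 0) (N : ℕ) :
    fpow u (N : ℚ) = (1 + u) ^ N := by
  rw [← fpow_exp_one hu, fpow_pow hu, mul_one]

lemma map_fpow {S : Type*} [CommRing S] [Algebra ℚ S] (f : R →ₐ[ℚ] S) (u : R⟦X⟧) (α : ℚ) :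
    PowerSeries.map f.toRingHom (fpow u α) =
      fpow (PowerSeries.map f.toRingHom u) α := by
  ext k
  rw [coeff_map, fpow, fpow, coeff_mk, coeff_mk, map_sum]
  refine Finset.sum_congr rfl fun j _ => ?_
  have h1 : (coeff k) ((PowerSeries.map f.toRingHom u) ^ j) = f ((coeff k) (u ^ j)) := by
    rw [← map_pow, coeff_map]; rfl
  rw [h1]
  exact f.toLinearMap.map_smul (gbinom α j) _

lemma pow_cancel_cc {R : Type*} [CommRing R] [IsDomain R] [Algebra ℚ R] {f g : R⟦X⟧} {N : ℕ}
    (hN : 0 < N) (h : f ^ N = g ^ N)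
    (hf : constantCoeff f = 1) (hg : constantCoeff g = 1) : f = g := by
  have hfac := geom_sum₂_mul f g N
  rw [h, sub_self] at hfac
  rcases mul_eq_zero.mp hfac with h1 | h2
  · exfalso
    have hcc : constantCoeff (∑ i ∈ Finset.range N, f ^ i * g ^ (N - 1 - i)) = (N : R) := by
      rw [map_sum]
      simp [hf, hg]
    rw [h1, map_zero] at hcc
    have h0 : (algebraMap ℚ R) (N : ℚ) = (algebraMap ℚ R) 0 := by
      rw [map_natCast, map_zero, ← hcc]
    exact (Nat.cast_ne_zero.mpr hN.ne') ((algebraMap ℚ R).injective h0)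
  · exact sub_eq_zero.mp h2

lemma fpow_fpow {R : Type*} [CommRing R] [IsDomain R] [Algebra ℚ R] {u : R⟦X⟧}
    (hu : constantCoeff u = 0) {m n : ℕ} (hm : 0 < m) (hn : 0 < n) :
    fpow (fpow u ((m : ℚ) / n) - 1) ((n : ℚ) / m) = 1 + u := by
  set α := (m : ℚ) / n
  set β := (n : ℚ) / m
  set W := fpow u α - 1 with hWdef
  have hW : constantCoeff W = 0 := by
    rw [hWdef, map_sub, constantCoeff_fpow hu, map_one, sub_self]
  have h1W : (1 : R⟦X⟧) + W = fpow u α := by rw [hWdef]; ring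
  refine pow_cancel_cc hm ?_ (constantCoeff_fpow hW β) (by rw [map_add, map_one, hu, add_zero])
  calc (fpow W β) ^ m = fpow W ((m : ℚ) * β) := fpow_pow hW β m
    _ = fpow W ((n : ℕ) : ℚ) := by
        congr 1
        simp only [β]
        have : (m : ℚ) ≠ 0 := by positivity
        field_simp
    _ = (1 + W) ^ n := fpow_natCast hW n
    _ = (fpow u α) ^ n := by rw [h1W]
    _ = fpow u ((n : ℚ) * α) := fpow_pow hu α n
    _ = fpow u ((m : ℕ) : ℚ) := by
        congr 1
        simp only [α]
        have : (n : ℚ) ≠ 0 := by positivity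
        field_simp
    _ = (1 + u) ^ m := fpow_natCast hu m

lemma coeff_sumX (N k : ℕ) :
    (coeff k)
      (∑ i : Fin N, PowerSeries.C (R := MvPolynomial (Fin N) ℚ) (MvPolynomial.X i) *
        PowerSeries.X ^ ((i : ℕ) + 2)) =
      if h : 2 ≤ k ∧ k < N + 2 then MvPolynomial.X (⟨k - 2, by omega⟩ : Fin N) else 0 := by
  rw [map_sum]
  have hterm : ∀ i : Fin N,
      (coeff k)
        (PowerSeries.C (R := MvPolynomial (Fin N) ℚ) (MvPolynomial.X i) *
          PowerSeries.X ^ ((i : ℕ) + 2)) =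
      if (i : ℕ) + 2 = k then MvPolynomial.X i else 0 := by
    intro i
    rw [coeff_C_mul, coeff_X_pow]
    split_ifs with h h' h'
    · rw [mul_one]
    · omega
    · omega
    · rw [mul_zero]
  rw [Finset.sum_congr rfl fun i _ => hterm i]
  split_ifs with h
  · rw [Finset.sum_eq_single (⟨k - 2, by omega⟩ : Fin N)]
    · simp only [Fin.val_mk]
      rw [if_pos (by omega)]
    · intro i _ hi
      rw [if_neg]
      intro hc
      exact hi (Fin.ext (by simp only [Fin.val_mk]; omega))
    · intro hmem
      exact (hmem (Finset.mem_univ _)).elim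
  · refine Finset.sum_eq_zero fun i _ => ?_
    rw [if_neg]
    have := i.isLt
    omega

theorem side (m n : ℕ) (hm : 0 < m) (hn : 0 < n)
    (w : ℕ → MvPolynomial (Fin (n - 1)) ℚ)
    (hw : ∀ k, w k = PowerSeries.coeff k (fpow
      (∑ i : Fin (n - 1), PowerSeries.C (R := MvPolynomial (Fin (n - 1)) ℚ) (MvPolynomial.X i) *
          PowerSeries.X ^ ((i : ℕ) + 2)) ((m : ℚ) / n)))
    (w' : ℕ → MvPolynomial (Fin (m - 1)) ℚ)
    (hw' : ∀ k, w' k = PowerSeries.coeff k (fpow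
      (∑ j : Fin (m - 1), PowerSeries.C (R := MvPolynomial (Fin (m - 1)) ℚ) (MvPolynomial.X j) *
          PowerSeries.X ^ ((j : ℕ) + 2)) ((n : ℚ) / m)))
    (J' : Ideal (MvPolynomial (Fin (m - 1)) ℚ))
    (hJ' : J' = Ideal.span {g | ∃ k, n < k ∧ g = w' k}) :
    ∀ k (hk2 : 2 ≤ k),
      Ideal.Quotient.mk J'
          ((MvPolynomial.aeval fun i : Fin (n - 1) => w' ((i : ℕ) + 2)) (w k)) =
        Ideal.Quotient.mk J'
          (if h : k < m + 1 then MvPolynomial.X (⟨k - 2, by omega⟩ : Fin (m - 1)) else 0) := by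
  set U : PowerSeries (MvPolynomial (Fin (n - 1)) ℚ) :=
    ∑ i : Fin (n - 1), PowerSeries.C (R := MvPolynomial (Fin (n - 1)) ℚ) (MvPolynomial.X i) *
      PowerSeries.X ^ ((i : ℕ) + 2) with hUdef
  set V : PowerSeries (MvPolynomial (Fin (m - 1)) ℚ) :=
    ∑ j : Fin (m - 1), PowerSeries.C (R := MvPolynomial (Fin (m - 1)) ℚ) (MvPolynomial.X j) *
      PowerSeries.X ^ ((j : ℕ) + 2) with hVdef
  have hcV : ∀ k, coeff k V =
      if h : 2 ≤ k ∧ k < (m - 1) + 2 then MvPolynomial.X (⟨k - 2, by omega⟩ : Fin (m - 1))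
      else 0 := fun k => coeff_sumX (m - 1) k
  have hcU : ∀ k, coeff k U =
      if h : 2 ≤ k ∧ k < (n - 1) + 2 then MvPolynomial.X (⟨k - 2, by omega⟩ : Fin (n - 1))
      else 0 := fun k => coeff_sumX (n - 1) k
  have hV0 : constantCoeff V = 0 := by
    rw [← coeff_zero_eq_constantCoeff_apply, hcV 0, dif_neg (by omega)]
  set β : ℚ := (n : ℚ) / m with hβ
  set α : ℚ := (m : ℚ) / n with hα
  set W' : PowerSeries (MvPolynomial (Fin (m - 1)) ℚ) := fpow V β - 1 with hW'def
  have hw'one : w' 1 = 0 := by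
    rw [hw' 1, coeff_fpow hV0 β (show (1:ℕ) < 2 by omega),
      Finset.sum_range_succ, Finset.sum_range_one, pow_zero, pow_one, hcV 1,
      dif_neg (show ¬(2 ≤ 1 ∧ 1 < (m - 1) + 2) by omega), smul_zero, coeff_one,
      if_neg one_ne_zero, smul_zero, add_zero]
  set g : MvPolynomial (Fin (n - 1)) ℚ →ₐ[ℚ] (MvPolynomial (Fin (m - 1)) ℚ ⧸ J') :=
    (Ideal.Quotient.mkₐ ℚ J').comp
      (MvPolynomial.aeval fun i : Fin (n - 1) => w' ((i : ℕ) + 2)) with hgdef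
  have step1 : PowerSeries.map g.toRingHom U =
      PowerSeries.map (Ideal.Quotient.mkₐ ℚ J').toRingHom W' := by
    ext k
    rw [coeff_map, coeff_map, hcU k]
    have hcW' : coeff k W' =
        w' k - (if k = 0 then 1 else 0) := by
      rw [hW'def, map_sub, coeff_one, hw' k]
    by_cases hk2 : 2 ≤ k ∧ k < (n - 1) + 2
    · rw [dif_pos hk2]
      have : (Ideal.Quotient.mkₐ ℚ J').toRingHom (coeff k W') =
          Ideal.Quotient.mk J' (w' k) := by
        rw [hcW', if_neg (by omega), sub_zero]; rfl
      rw [this, hgdef]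
      show Ideal.Quotient.mk J' ((MvPolynomial.aeval fun i : Fin (n - 1) =>
        w' ((i : ℕ) + 2)) (MvPolynomial.X _)) = _
      rw [MvPolynomial.aeval_X]
      congr 2
      simp only [Fin.val_mk]
      omega
    · rw [dif_neg hk2, map_zero]
      rcases Nat.lt_or_ge k 2 with hklt | hkge
      · -- k = 0 or 1
        interval_cases k
        · have hcc : coeff 0 (fpow V β) = 1 := by
            rw [coeff_zero_eq_constantCoeff_apply, constantCoeff_fpow hV0]
          have : coeff 0 W' = 0 := by
            rw [hW'def, map_sub, hcc, coeff_one, if_pos rfl, sub_self]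
          rw [this, map_zero]
        · rw [hcW', if_neg one_ne_zero, sub_zero, hw'one, map_zero]
      · -- k > n
        have hkn : n < k := by omega
        have : w' k ∈ J' := hJ' ▸ Ideal.subset_span ⟨k, hkn, rfl⟩
        rw [hcW', if_neg (by omega), sub_zero]
        exact (Ideal.Quotient.eq_zero_iff_mem.mpr this).symm
  have hU0 : constantCoeff U = 0 := by
    rw [← coeff_zero_eq_constantCoeff_apply, hcU 0, dif_neg (by omega)]
  have hW'0 : constantCoeff W' = 0 := by
    rw [hW'def, map_sub, constantCoeff_fpow hV0, map_one, sub_self]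
  have key : fpow W' α = 1 + V := fpow_fpow hV0 hn hm
  have step2 : ∀ k, Ideal.Quotient.mk J'
        ((MvPolynomial.aeval fun i : Fin (n - 1) => w' ((i : ℕ) + 2)) (w k)) =
      Ideal.Quotient.mk J' (coeff k (1 + V)) := by
    intro k
    show g (w k) = _
    have h1 : g (w k) = coeff k (PowerSeries.map g.toRingHom (fpow U α)) := by
      rw [coeff_map, hw k]; rfl
    rw [h1, map_fpow, step1, ← map_fpow, key, coeff_map]
    rfl
  intro k hk2
  rw [step2 k]
  show _ = Ideal.Quotient.mk J' _
  congr 1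
  rw [map_add, coeff_one, if_neg (by omega), zero_add, hcV k]
  have hmeq : (m - 1) + 2 = m + 1 := by omega
  by_cases hkm : k < m + 1
  · rw [dif_pos (by omega), dif_pos hkm]
  · rw [dif_neg (by omega), dif_neg hkm]

/-- `ℚ[u₂,…,uₙ]/J_{m/n} ≅ ℚ[v₂,…,v_m]/J_{n/m}`, the isomorphism sending (the class of)
`v_j` to (the class of) `w_j`, the `z^j`-coefficient of `(1+z²u₂+⋯+zⁿuₙ)^{m/n}`.
Since each `w_j` is weighted-homogeneous of degree `j` (with `deg uᵢ = deg vᵢ = i`),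
this isomorphism is graded.  `X i : ℚ[Fin (n-1)]` stands for `u_{i+2}` and
`X j : ℚ[Fin (m-1)]` for `v_{j+2}`. -/
theorem quotients_isomorphic (m n : ℕ) (hm : 0 < m) (hn : 0 < n) (hmn : Nat.Coprime m n)
    (w : ℕ → MvPolynomial (Fin (n - 1)) ℚ)
    (hw : ∀ k, w k = PowerSeries.coeff k (fpow
      (∑ i : Fin (n - 1),
        PowerSeries.C (R := MvPolynomial (Fin (n - 1)) ℚ) (MvPolynomial.X i) *
          PowerSeries.X ^ ((i : ℕ) + 2)) ((m : ℚ) / n)))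
    (w' : ℕ → MvPolynomial (Fin (m - 1)) ℚ)
    (hw' : ∀ k, w' k = PowerSeries.coeff k (fpow
      (∑ j : Fin (m - 1),
        PowerSeries.C (R := MvPolynomial (Fin (m - 1)) ℚ) (MvPolynomial.X j) *
          PowerSeries.X ^ ((j : ℕ) + 2)) ((n : ℚ) / m)))
    (J : Ideal (MvPolynomial (Fin (n - 1)) ℚ)) (hJ : J = Ideal.span {g | ∃ k, m < k ∧ g = w k})
    (J' : Ideal (MvPolynomial (Fin (m - 1)) ℚ))
    (hJ' : J' = Ideal.span {g | ∃ k, n < k ∧ g = w' k}) :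
    ∃ e : (MvPolynomial (Fin (m - 1)) ℚ ⧸ J') ≃+* (MvPolynomial (Fin (n - 1)) ℚ ⧸ J),
      ∀ j : Fin (m - 1),
        e (Ideal.Quotient.mk J' (MvPolynomial.X j)) = Ideal.Quotient.mk J (w ((j : ℕ) + 2)) := by
  -- the two instantiations of the key computation
  have sideA := side m n hm hn w hw w' hw' J' hJ'
  have sideB := side n m hn hm w' hw' w hw J hJ
  -- the algebra hom `S → R/J` and `R → S/J'`
  set φ₀ : MvPolynomial (Fin (m - 1)) ℚ →ₐ[ℚ] (MvPolynomial (Fin (n - 1)) ℚ ⧸ J) :=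
    (Ideal.Quotient.mkₐ ℚ J).comp
      (MvPolynomial.aeval fun j : Fin (m - 1) => w ((j : ℕ) + 2)) with hφ₀
  set ψ₀ : MvPolynomial (Fin (n - 1)) ℚ →ₐ[ℚ] (MvPolynomial (Fin (m - 1)) ℚ ⧸ J') :=
    (Ideal.Quotient.mkₐ ℚ J').comp
      (MvPolynomial.aeval fun i : Fin (n - 1) => w' ((i : ℕ) + 2)) with hψ₀
  have hφ₀z : ∀ a ∈ J', φ₀ a = 0 := by
    have hle : Ideal.span {g | ∃ k, n < k ∧ g = w' k} ≤ RingHom.ker φ₀.toRingHom := by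
      rw [Ideal.span_le]
      rintro g ⟨k, hk, rfl⟩
      have := sideB k (by omega)
      rw [dif_neg (by omega), map_zero] at this
      exact this
    intro a ha
    exact hle (hJ' ▸ ha)
  have hψ₀z : ∀ a ∈ J, ψ₀ a = 0 := by
    have hle : Ideal.span {g | ∃ k, m < k ∧ g = w k} ≤ RingHom.ker ψ₀.toRingHom := by
      rw [Ideal.span_le]
      rintro g ⟨k, hk, rfl⟩
      have := sideA k (by omega)
      rw [dif_neg (by omega), map_zero] at this
      exact this
    intro a ha
    exact hle (hJ ▸ ha)
  set φ : (MvPolynomial (Fin (m - 1)) ℚ ⧸ J') →ₐ[ℚ] (MvPolynomial (Fin (n - 1)) ℚ ⧸ J) :=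
    Ideal.Quotient.liftₐ J' φ₀ hφ₀z with hφ
  set ψ : (MvPolynomial (Fin (n - 1)) ℚ ⧸ J) →ₐ[ℚ] (MvPolynomial (Fin (m - 1)) ℚ ⧸ J') :=
    Ideal.Quotient.liftₐ J ψ₀ hψ₀z with hψ
  have hφmk : ∀ p, φ (Ideal.Quotient.mk J' p) = φ₀ p := fun p => by
    rw [hφ]; exact AlgHom.congr_fun (Ideal.Quotient.liftₐ_comp J' φ₀ hφ₀z) p
  have hψmk : ∀ p, ψ (Ideal.Quotient.mk J p) = ψ₀ p := fun p => by
    rw [hψ]; exact AlgHom.congr_fun (Ideal.Quotient.liftₐ_comp J ψ₀ hψ₀z) p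
  -- values on generators
  have hφX : ∀ j : Fin (m - 1),
      φ (Ideal.Quotient.mk J' (MvPolynomial.X j)) = Ideal.Quotient.mk J (w ((j : ℕ) + 2)) := by
    intro j
    rw [hφmk, hφ₀]
    show Ideal.Quotient.mk J ((MvPolynomial.aeval fun j : Fin (m - 1) =>
      w ((j : ℕ) + 2)) (MvPolynomial.X j)) = _
    rw [MvPolynomial.aeval_X]
  have hψX : ∀ i : Fin (n - 1),
      ψ (Ideal.Quotient.mk J (MvPolynomial.X i)) = Ideal.Quotient.mk J' (w' ((i : ℕ) + 2)) := by
    intro i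
    rw [hψmk, hψ₀]
    show Ideal.Quotient.mk J' ((MvPolynomial.aeval fun i : Fin (n - 1) =>
      w' ((i : ℕ) + 2)) (MvPolynomial.X i)) = _
    rw [MvPolynomial.aeval_X]
  -- compositions
  have hψw : ∀ j : Fin (m - 1),
      ψ (Ideal.Quotient.mk J (w ((j : ℕ) + 2))) = Ideal.Quotient.mk J' (MvPolynomial.X j) := by
    intro j
    rw [hψmk, hψ₀]
    have := sideA ((j : ℕ) + 2) (by omega)
    have hjlt : (j : ℕ) + 2 < m + 1 := by have := j.isLt; omega
    rw [dif_pos hjlt] at this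
    show Ideal.Quotient.mk J' ((MvPolynomial.aeval fun i : Fin (n - 1) =>
      w' ((i : ℕ) + 2)) (w ((j : ℕ) + 2))) = _
    rw [this]
    exact congrArg _ (congrArg _ (Fin.ext (by simp only [Fin.val_mk]; omega)))
  have hφw : ∀ i : Fin (n - 1),
      φ (Ideal.Quotient.mk J' (w' ((i : ℕ) + 2))) = Ideal.Quotient.mk J (MvPolynomial.X i) := by
    intro i
    rw [hφmk, hφ₀]
    have := sideB ((i : ℕ) + 2) (by omega)
    have hilt : (i : ℕ) + 2 < n + 1 := by have := i.isLt; omega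
    rw [dif_pos hilt] at this
    show Ideal.Quotient.mk J ((MvPolynomial.aeval fun j : Fin (m - 1) =>
      w ((j : ℕ) + 2)) (w' ((i : ℕ) + 2))) = _
    rw [this]
    exact congrArg _ (congrArg _ (Fin.ext (by simp only [Fin.val_mk]; omega)))
  have comp1 : φ.comp ψ = AlgHom.id ℚ _ := by
    apply Ideal.Quotient.algHom_ext
    apply MvPolynomial.algHom_ext
    intro i
    show φ (ψ (Ideal.Quotient.mkₐ ℚ J (MvPolynomial.X i))) = _
    rw [Ideal.Quotient.mkₐ_eq_mk, hψX i, hφw i]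
    rfl
  have comp2 : ψ.comp φ = AlgHom.id ℚ _ := by
    apply Ideal.Quotient.algHom_ext
    apply MvPolynomial.algHom_ext
    intro j
    show ψ (φ (Ideal.Quotient.mkₐ ℚ J' (MvPolynomial.X j))) = _
    rw [Ideal.Quotient.mkₐ_eq_mk, hφX j, hψw j]
    rfl
  exact ⟨(AlgEquiv.ofAlgHom φ ψ comp1 comp2).toRingEquiv, hφX⟩
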